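/- (Key analytic step of the NSW approximation.) Let B_i > 0 and B'_i ≥ 0 for i = 1,…,n, set 𝔅 = Σ_i B_i, and suppose Σ_i B'_i ≤ 𝔅. Then Σ_i (B_i/𝔅) · log(max{1, B'_i/B_i}) ≤ 1/e. -/

import Mathlib

open Finset

/-- `log x ≤ x / e` for positive `x`. -/
lemma log_le_div_e {x : ℝ} (hx : 0 < x) : Real.log x ≤ x / Real.exp 1 := by
  have he : (0:ℝ) < Real.exp 1 := Real.exp_pos 1
  have h1 : Real.log x = Real.log (x / Real.exp 1) + 1 := by
    rw [Real.log_div (ne_of_gt hx) (ne_of_gt he), Real.log_exp]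
    ring
  have h2 : Real.log (x / Real.exp 1) ≤ x / Real.exp 1 - 1 :=
    Real.log_le_sub_one_of_pos (div_pos hx he)
  linarith

theorem stmt17 {n : ℕ} (B B' : Fin n → ℝ) (hB : ∀ i, 0 < B i) (hB' : ∀ i, 0 ≤ B' i)
    (hsum : ∑ i, B' i ≤ ∑ i, B i) :
    ∑ i, (B i / ∑ k, B k) * Real.log (max 1 (B' i / B i)) ≤ (Real.exp 1)⁻¹ := by
  set 𝔅 := ∑ k, B k with h𝔅
  set A : Finset (Fin n) := Finset.univ.filter (fun i => 1 ≤ B' i / B i) with hA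
  have hsplit : ∑ i, (B i / 𝔅) * Real.log (max 1 (B' i / B i))
      = ∑ i ∈ A, (B i / 𝔅) * Real.log (B' i / B i) := by
    rw [← Finset.sum_filter_add_sum_filter_not Finset.univ (fun i => 1 ≤ B' i / B i)]
    have h1 : ∀ i ∈ A, (B i / 𝔅) * Real.log (max 1 (B' i / B i))
        = (B i / 𝔅) * Real.log (B' i / B i) := by
      intro i hi
      rw [max_eq_right (Finset.mem_filter.mp hi).2]
    have h2 : ∀ i ∈ Finset.univ.filter (fun i => ¬ 1 ≤ B' i / B i),
        (B i / 𝔅) * Real.log (max 1 (B' i / B i)) = 0 := by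
      intro i hi
      have := (Finset.mem_filter.mp hi).2
      rw [max_eq_left (le_of_not_ge this), Real.log_one, mul_zero]
    rw [Finset.sum_congr rfl h1, Finset.sum_congr rfl h2, Finset.sum_const_zero, add_zero]
  rw [hsplit]
  rcases A.eq_empty_or_nonempty with hAe | hAne
  · rw [hAe, Finset.sum_empty]
    positivity
  · obtain ⟨i0, _⟩ := hAne
    have h𝔅pos : 0 < 𝔅 := Finset.sum_pos (fun i _ => hB i) ⟨i0, Finset.mem_univ i0⟩
    set s := ∑ i ∈ A, B i with hsdef
    set s' := ∑ i ∈ A, B' i with hs'def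
    have hs : 0 < s := Finset.sum_pos (fun i _ => hB i) ⟨i0, ‹i0 ∈ A›⟩
    have hBle : ∀ i ∈ A, B i ≤ B' i := by
      intro i hi
      have h1 := (Finset.mem_filter.mp hi).2
      exact (one_le_div (hB i)).mp h1
    have hss' : s ≤ s' := Finset.sum_le_sum hBle
    have hs'𝔅 : s' ≤ 𝔅 := by
      calc s' ≤ ∑ i, B' i :=
            Finset.sum_le_sum_of_subset_of_nonneg (Finset.subset_univ A)
              (fun i _ _ => hB' i)
        _ ≤ 𝔅 := hsum
    -- Jensen (log-sum inequality)
    have jensen : ∑ i ∈ A, (B i / s) * Real.log (B' i / B i) ≤ Real.log (s' / s) := by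
      have hconc : ConcaveOn ℝ (Set.Ioi 0) Real.log := strictConcaveOn_log_Ioi.concaveOn
      have key := hconc.le_map_sum (t := A) (w := fun i => B i / s)
        (p := fun i => B' i / B i)
        (fun i _ => le_of_lt (div_pos (hB i) hs))
        (by rw [← Finset.sum_div]; field_simp; exact hsdef.symm)
        (fun i hi => lt_of_lt_of_le one_pos (Finset.mem_filter.mp hi).2)
      have hsum' : ∑ i ∈ A, (B i / s) • (B' i / B i) = s' / s := by
        rw [Finset.sum_congr rfl (fun i hi => ?_), ← Finset.sum_div]
        show B i / s * (B' i / B i) = B' i / s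
        rw [div_mul_div_comm, mul_comm s (B i), mul_div_mul_left _ _ (ne_of_gt (hB i))]
      rw [hsum'] at key
      simpa using key
    -- rescale
    have hstep : ∑ i ∈ A, (B i / 𝔅) * Real.log (B' i / B i)
        = (s / 𝔅) * ∑ i ∈ A, (B i / s) * Real.log (B' i / B i) := by
      rw [Finset.mul_sum]
      refine Finset.sum_congr rfl (fun i hi => ?_)
      field_simp
    rw [hstep]
    have h1 : (s / 𝔅) * ∑ i ∈ A, (B i / s) * Real.log (B' i / B i)
        ≤ (s / 𝔅) * Real.log (s' / s) :=
      mul_le_mul_of_nonneg_left jensen (le_of_lt (div_pos hs h𝔅pos))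
    have h2 : (s / 𝔅) * Real.log (s' / s) ≤ (s / 𝔅) * Real.log (𝔅 / s) := by
      refine mul_le_mul_of_nonneg_left ?_ (le_of_lt (div_pos hs h𝔅pos))
      exact Real.log_le_log (div_pos (lt_of_lt_of_le hs hss') hs)
        (div_le_div_of_nonneg_right hs'𝔅 hs.le)
    have h3 : (s / 𝔅) * Real.log (𝔅 / s) ≤ (Real.exp 1)⁻¹ := by
      have hlog := log_le_div_e (div_pos h𝔅pos hs)
      have hs𝔅 : 0 < s / 𝔅 := div_pos hs h𝔅pos
      calc (s / 𝔅) * Real.log (𝔅 / s) ≤ (s / 𝔅) * ((𝔅 / s) / Real.exp 1) :=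
            mul_le_mul_of_nonneg_left hlog (le_of_lt hs𝔅)
        _ = (Real.exp 1)⁻¹ := by
            field_simp
    linarith
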